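/- Let Σ_x and Σ̃_e be m × m real symmetric positive definite matrices with all diagonal entries equal to 1. Let B = diag(b₁, …, b_m) and L = diag(l₁, …, l_m) with b_i ∈ [−1, 1], l_i > 0, and b_i² + l_i² = 1 for all i. Suppose there exist indices i, j such that (b_i ≠ 0 or b_j ≠ 0) and |(Σ̃_e)_{ij}| ≠ |(Σ_x)_{ij}|. Then L Σ̃_e B ≠ B Σ_x L, and consequently J(B, L) > 0. -/

import Mathlib

open Matrix

lemma one_lt_det_one_add {n : Type*} [Fintype n] [DecidableEq n]
    {T : Matrix n n ℝ} (hT : T.PosSemidef) (hT0 : T ≠ 0) :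
    1 < (1 + T).det := by
  have hH := hT.1
  set U := (Matrix.IsHermitian.eigenvectorUnitary hH : Matrix n n ℝ) with hUdef
  have hUU : U * star U = 1 :=
    (Matrix.mem_unitaryGroup_iff).mp (Matrix.IsHermitian.eigenvectorUnitary hH).2
  have hspec : T = U * Matrix.diagonal hH.eigenvalues * star U := by
    have := hH.spectral_theorem
    rwa [RCLike.ofReal_real_eq_id, Function.id_comp] at this
  have h1T : 1 + T = U * (1 + Matrix.diagonal hH.eigenvalues) * star U := by
    rw [Matrix.mul_add, Matrix.add_mul, Matrix.mul_one, hUU, ← hspec]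
  have hdetU : U.det * (star U).det = 1 := by
    rw [← Matrix.det_mul, hUU, Matrix.det_one]
  have hdet : (1 + T).det = (1 + Matrix.diagonal hH.eigenvalues).det := by
    rw [h1T, Matrix.det_mul, Matrix.det_mul]
    rw [mul_right_comm, hdetU, one_mul]
  rw [hdet]
  have hdiag : (1 : Matrix n n ℝ) + Matrix.diagonal hH.eigenvalues
      = Matrix.diagonal (fun i => 1 + hH.eigenvalues i) := by
    rw [← Matrix.diagonal_one, Matrix.diagonal_add]
  rw [hdiag, Matrix.det_diagonal]
  have hex : ∃ i, hH.eigenvalues i ≠ 0 := by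
    by_contra h
    push_neg at h
    apply hT0
    rw [hspec]
    have : Matrix.diagonal hH.eigenvalues = 0 := by
      ext i j
      by_cases hij : i = j <;> simp [Matrix.diagonal_apply, hij, h]
    rw [this, Matrix.mul_zero, Matrix.zero_mul]
  obtain ⟨i, hi⟩ := hex
  calc (1:ℝ) = ∏ _j : n, 1 := by simp
  _ < ∏ j, (1 + hH.eigenvalues j) := by
    refine Finset.prod_lt_prod (fun j _ => one_pos) (fun j _ => ?_) ⟨i, Finset.mem_univ i, ?_⟩
    · linarith [hT.eigenvalues_nonneg j]
    · have := hT.eigenvalues_nonneg i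
      have : 0 < hH.eigenvalues i := lt_of_le_of_ne this (Ne.symm hi)
      linarith

lemma posDef_conj_tm {n : Type*} [Fintype n] [DecidableEq n]
    {A : Matrix n n ℝ} (hA : A.PosDef) (B : Matrix n n ℝ) (hB : IsUnit B.det) :
    (Bᴴ * A * B).PosDef := by
  refine Matrix.PosDef.of_dotProduct_mulVec_pos (Matrix.isHermitian_conjTranspose_mul_mul B hA.1) fun x hx => ?_
  have hBx : B *ᵥ x ≠ 0 := by
    intro h
    exact hx (Matrix.mulVec_injective_iff_isUnit.mpr ((Matrix.isUnit_iff_isUnit_det B).mpr hB) (by rw [h, Matrix.mulVec_zero]))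
  simpa only [star_mulVec, dotProduct_mulVec, vecMul_vecMul] using hA.dotProduct_mulVec_pos hBx

open scoped MatrixOrder in
lemma det_lt_det_add_tm {n : Type*} [Fintype n] [DecidableEq n]
    {A S : Matrix n n ℝ} (hA : A.PosDef) (hS : S.PosSemidef) (hS0 : S ≠ 0) :
    A.det < (A + S).det := by
  have hAinv : (A⁻¹).PosDef := hA.inv
  have hdetA : IsUnit A.det := isUnit_iff_ne_zero.mpr (ne_of_gt hA.det_pos)
  set R := CFC.sqrt (A⁻¹) with hRdef
  have hRR : R * R = A⁻¹ := CFC.sqrt_mul_sqrt_self (A⁻¹) hAinv.posSemidef.nonneg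
  have hRpsd : R.PosSemidef := (CFC.sqrt_nonneg (A⁻¹)).posSemidef
  have hRH : Rᴴ = R := hRpsd.1
  have hdetR : R.det ≠ 0 := by
    intro h
    have : (A⁻¹).det = 0 := by rw [← hRR, Matrix.det_mul, h, zero_mul]
    have := hAinv.det_pos
    simp_all
  set T := R * S * R with hTdef
  have hTpsd : T.PosSemidef := by
    have := hS.conjTranspose_mul_mul_same R
    rwa [hRH] at this
  have hT0 : T ≠ 0 := by
    intro h
    apply hS0
    have h1 : R⁻¹ * (R * S * R) * R⁻¹ = S := by
      rw [← Matrix.mul_assoc, ← Matrix.mul_assoc, Matrix.nonsing_inv_mul R (isUnit_iff_ne_zero.mpr hdetR),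
        Matrix.one_mul, Matrix.mul_assoc, Matrix.mul_nonsing_inv R (isUnit_iff_ne_zero.mpr hdetR), Matrix.mul_one]
    rw [← h1, ← hTdef, h, Matrix.mul_zero, Matrix.zero_mul]
  have hsplit : A + S = A * (1 + A⁻¹ * S) := by
    rw [Matrix.mul_add, Matrix.mul_one, ← Matrix.mul_assoc, Matrix.mul_nonsing_inv A hdetA, Matrix.one_mul]
  have hdet1 : (1 + A⁻¹ * S).det = (1 + T).det := by
    rw [← hRR, Matrix.mul_assoc, Matrix.det_one_add_mul_comm, hTdef, Matrix.mul_assoc]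
  have := one_lt_det_one_add hTpsd hT0
  calc A.det = A.det * 1 := (mul_one _).symm
  _ < A.det * (1 + T).det := by exact (mul_lt_mul_iff_right₀ hA.det_pos).mpr this
  _ = (A + S).det := by rw [hsplit, Matrix.det_mul, hdet1]

theorem stmt10 {m : ℕ} (Sx Se : Matrix (Fin m) (Fin m) ℝ)
    (hx : Sx.PosDef) (he : Se.PosDef)
    (hxd : ∀ i, Sx i i = 1) (hed : ∀ i, Se i i = 1)
    (b l : Fin m → ℝ)
    (hb : ∀ i, b i ∈ Set.Icc (-1 : ℝ) 1) (hl : ∀ i, 0 < l i)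
    (hbl : ∀ i, b i ^ 2 + l i ^ 2 = 1)
    (hdiv : ∃ i j : Fin m, (b i ≠ 0 ∨ b j ≠ 0) ∧ |Se i j| ≠ |Sx i j|) :
    Matrix.diagonal l * Se * Matrix.diagonal b
        ≠ Matrix.diagonal b * Sx * Matrix.diagonal l
    ∧ 0 < - Real.log Sx.det - Real.log Se.det
        + Real.log (Matrix.diagonal b * Sx * Matrix.diagonal b
            + Matrix.diagonal l * Se * Matrix.diagonal l).det
        + Real.log (Matrix.diagonal l * Sx * Matrix.diagonal l
            + Matrix.diagonal b * Se * Matrix.diagonal b).det := by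
  classical
  set Db := Matrix.diagonal b with hDb
  set Dl := Matrix.diagonal l with hDl
  -- Part 1
  have hne : Dl * Se * Db ≠ Db * Sx * Dl := by
    intro hEq
    obtain ⟨i, j, hbij, habs⟩ := hdiv
    have e1 : l i * Se i j * b j = b i * Sx i j * l j := by
      have := Matrix.ext_iff.mpr hEq i j
      simpa [hDb, hDl, Matrix.mul_diagonal, Matrix.diagonal_mul] using this
    have e2 : l j * Se j i * b i = b j * Sx j i * l i := by
      have := Matrix.ext_iff.mpr hEq j i
      simpa [hDb, hDl, Matrix.mul_diagonal, Matrix.diagonal_mul] using this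
    have hSeji : Se j i = Se i j := by simpa using he.1.apply i j
    have hSxji : Sx j i = Sx i j := by simpa using hx.1.apply i j
    rw [hSeji, hSxji] at e2
    have hli : l i ≠ 0 := (hl i).ne'
    have hlj : l j ≠ 0 := (hl j).ne'
    rcases eq_or_ne (b i) 0 with hbi | hbi
    · have hbj : b j ≠ 0 := hbij.resolve_left (not_not.mpr hbi)
      have hSe0 : Se i j = 0 := by
        have hd : l i * Se i j * b j = 0 := by rw [e1, hbi]; ring
        by_contra h
        exact (mul_ne_zero (mul_ne_zero hli h) hbj) hd
      have hSx0 : Sx i j = 0 := by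
        have hd : b j * Sx i j * l i = 0 := by rw [← e2, hbi]; ring
        by_contra h
        exact (mul_ne_zero (mul_ne_zero hbj h) hli) hd
      exact habs (by rw [hSe0, hSx0])
    · rcases eq_or_ne (b j) 0 with hbj | hbj
      · have hSx0 : Sx i j = 0 := by
          have hd : b i * Sx i j * l j = 0 := by rw [← e1, hbj]; ring
          by_contra h
          exact (mul_ne_zero (mul_ne_zero hbi h) hlj) hd
        have hSe0 : Se i j = 0 := by
          have hd : l j * Se i j * b i = 0 := by rw [e2, hbj]; ring
          by_contra h
          exact (mul_ne_zero (mul_ne_zero hlj h) hbi) hd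
        exact habs (by rw [hSe0, hSx0])
      · have h3 : (l i * Se i j * b j) * (l j * Se i j * b i)
            = (b i * Sx i j * l j) * (b j * Sx i j * l i) := by rw [e1, e2]
        have hc : l i * l j * b i * b j ≠ 0 :=
          mul_ne_zero (mul_ne_zero (mul_ne_zero hli hlj) hbi) hbj
        have h4 : Se i j * Se i j = Sx i j * Sx i j :=
          mul_left_cancel₀ hc (by linear_combination h3)
        rcases mul_self_eq_mul_self_iff.mp h4 with h | h
        · exact habs (by rw [h])
        · exact habs (abs_eq_abs.mpr (Or.inr h))
  refine ⟨hne, ?_⟩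
  -- setup
  set M := Db * Sx * Db + Dl * Se * Dl with hM
  set N := Dl * Sx * Dl + Db * Se * Db with hN
  set C := Db * Sx * Dl - Dl * Se * Db with hC
  have hDbT : Dbᵀ = Db := Matrix.diagonal_transpose b
  have hDlT : Dlᵀ = Dl := Matrix.diagonal_transpose l
  have hDbH : Dbᴴ = Db := by rw [Matrix.conjTranspose_eq_transpose_of_trivial, hDbT]
  have hDlH : Dlᴴ = Dl := by rw [Matrix.conjTranspose_eq_transpose_of_trivial, hDlT]
  have hSxT : Sxᵀ = Sx := by
    rw [← Matrix.conjTranspose_eq_transpose_of_trivial]; exact hx.1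
  have hSeT : Seᵀ = Se := by
    rw [← Matrix.conjTranspose_eq_transpose_of_trivial]; exact he.1
  have hCH : Cᴴ = Dl * Sx * Db - Db * Se * Dl := by
    rw [Matrix.conjTranspose_eq_transpose_of_trivial, hC, Matrix.transpose_sub,
      Matrix.transpose_mul, Matrix.transpose_mul, Matrix.transpose_mul, Matrix.transpose_mul,
      hDbT, hDlT, hSxT, hSeT, Matrix.mul_assoc, Matrix.mul_assoc]
  set Q : Matrix (Fin m ⊕ Fin m) (Fin m ⊕ Fin m) ℝ := Matrix.fromBlocks Db Dl Dl (-Db) with hQ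
  set P : Matrix (Fin m ⊕ Fin m) (Fin m ⊕ Fin m) ℝ := Matrix.fromBlocks Sx 0 0 Se with hP
  have hQT : Qᵀ = Q := by
    rw [hQ, Matrix.fromBlocks_transpose, hDbT, hDlT, Matrix.transpose_neg, hDbT]
  have hDbDl : Db * Dl = Dl * Db := by
    rw [hDb, hDl, Matrix.diagonal_mul_diagonal, Matrix.diagonal_mul_diagonal]
    exact congrArg _ (mul_comm b l)
  have hd1 : Db * Db + Dl * Dl = 1 := by
    rw [hDb, hDl, Matrix.diagonal_mul_diagonal, Matrix.diagonal_mul_diagonal,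
      Matrix.diagonal_add, ← Matrix.diagonal_one]
    exact congrArg Matrix.diagonal (funext fun i => by nlinarith [hbl i])
  have hQQ : Q * Qᵀ = 1 := by
    rw [hQT, hQ, Matrix.fromBlocks_multiply, ← Matrix.fromBlocks_one]
    have h12 : Db * Dl + Dl * -Db = 0 := by rw [Matrix.mul_neg, hDbDl, add_neg_cancel]
    have h21 : Dl * Db + -Db * Dl = 0 := by rw [Matrix.neg_mul, ← hDbDl, add_neg_cancel]
    have h22 : Dl * Dl + -Db * -Db = 1 := by rw [neg_mul_neg, add_comm, hd1]
    rw [hd1, h12, h21, h22]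
  have hQPQ : Q * P * Qᵀ = Matrix.fromBlocks M C Cᴴ N := by
    rw [hQT, hQ, hP, Matrix.fromBlocks_multiply, Matrix.fromBlocks_multiply]
    simp only [Matrix.mul_zero, Matrix.zero_mul, add_zero, zero_add]
    have hb12 : Db * Sx * Dl + Dl * Se * -Db = C := by
      rw [hC, Matrix.mul_neg, sub_eq_add_neg]
    have hb21 : Dl * Sx * Db + -Db * Se * Dl = Cᴴ := by
      rw [hCH, Matrix.neg_mul, Matrix.neg_mul, sub_eq_add_neg]
    have hb22 : Dl * Sx * Dl + -Db * Se * -Db = N := by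
      rw [hN, Matrix.neg_mul, neg_mul_neg]
    rw [hb12, hb21, hb22]
  -- positive definiteness
  have hdetDl : IsUnit Dl.det := by
    rw [hDl, Matrix.det_diagonal]
    exact isUnit_iff_ne_zero.mpr (Finset.prod_ne_zero_iff.mpr fun i _ => (hl i).ne')
  have hDlSeDl : (Dl * Se * Dl).PosDef := by
    have := posDef_conj_tm he Dl hdetDl
    rwa [hDlH] at this
  have hDlSxDl : (Dl * Sx * Dl).PosDef := by
    have := posDef_conj_tm hx Dl hdetDl
    rwa [hDlH] at this
  have hMpd : M.PosDef := by
    rw [hM]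
    refine Matrix.PosDef.posSemidef_add ?_ hDlSeDl
    have := hx.posSemidef.mul_mul_conjTranspose_same Db
    rwa [hDbH] at this
  have hNpd : N.PosDef := by
    rw [hN]
    refine Matrix.PosDef.add_posSemidef hDlSxDl ?_
    have := he.posSemidef.mul_mul_conjTranspose_same Db
    rwa [hDbH] at this
  have hdetQT : IsUnit Qᵀ.det := by
    refine IsUnit.of_mul_eq_one Q.det ?_
    rw [mul_comm, ← Matrix.det_mul, hQQ, Matrix.det_one]
  have hPpd : P.PosDef := by
    refine Matrix.PosDef.of_dotProduct_mulVec_pos ?_ ?_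
    · show Pᴴ = P
      rw [hP, Matrix.fromBlocks_conjTranspose, Matrix.conjTranspose_zero, hx.1.eq, he.1.eq]
    · intro x hx0
      have hx' : x = Sum.elim (x ∘ Sum.inl) (x ∘ Sum.inr) := (Sum.elim_comp_inl_inr x).symm
      rw [hP, hx', Matrix.fromBlocks_mulVec]
      simp only [Sum.elim_comp_inl_inr, Matrix.zero_mulVec, add_zero, zero_add]
      have hstar : star x = Sum.elim (star (x ∘ Sum.inl)) (star (x ∘ Sum.inr)) := by
        rw [hx']; exact Function.star_sumElim _ _
      rw [hstar, sumElim_dotProduct_sumElim]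
      rcases (by
        by_contra h
        push_neg at h
        apply hx0
        rw [hx', h.1, h.2]
        ext (i | i) <;> simp : x ∘ Sum.inl ≠ 0 ∨ x ∘ Sum.inr ≠ 0) with h | h
      · exact add_pos_of_pos_of_nonneg (hx.dotProduct_mulVec_pos h) (he.posSemidef.dotProduct_mulVec_nonneg _)
      · exact add_pos_of_nonneg_of_pos (hx.posSemidef.dotProduct_mulVec_nonneg _) (he.dotProduct_mulVec_pos h)
  have hBlockPD : (Matrix.fromBlocks M C Cᴴ N).PosDef := by
    rw [← hQPQ]
    have := posDef_conj_tm hPpd Qᵀ hdetQT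
    rwa [Matrix.conjTranspose_eq_transpose_of_trivial, Matrix.transpose_transpose] at this
  have hCne : C ≠ 0 := by
    rw [hC]
    exact sub_ne_zero.mpr (Ne.symm hne)
  haveI : Invertible M := M.invertibleOfIsUnitDet (isUnit_iff_ne_zero.mpr hMpd.det_pos.ne')
  set S := Cᴴ * M⁻¹ * C with hS
  have hSpsd : S.PosSemidef := hMpd.inv.posSemidef.conjTranspose_mul_mul_same C
  have hS0 : S ≠ 0 := by
    intro h0
    apply hCne
    ext i j
    have hCx : C *ᵥ Pi.single j 1 = 0 := by
      by_contra hCx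
      have h2 := hMpd.inv.dotProduct_mulVec_pos hCx
      have h3 : (0:ℝ) < star (Pi.single j 1) ⬝ᵥ (S *ᵥ (Pi.single j 1 : Fin m → ℝ)) := by
        rw [hS]
        simpa only [star_mulVec, dotProduct_mulVec, vecMul_vecMul] using h2
      rw [h0] at h3
      simp at h3
    have := congrFun hCx i
    simpa [Matrix.mulVec_single] using this
  have hSchurPD : (N - S).PosDef := by
    refine Matrix.PosDef.of_dotProduct_mulVec_pos ?_ ?_
    · exact hNpd.1.sub (Matrix.isHermitian_conjTranspose_mul_mul C hMpd.inv.1)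
    · intro y hy
      have hvne : Sum.elim (-((M⁻¹ * C) *ᵥ y)) y ≠ 0 := by
        intro h
        apply hy
        funext i
        exact congrFun h (Sum.inr i)
      have hv := hBlockPD.dotProduct_mulVec_pos hvne
      rw [dotProduct_mulVec, Matrix.schur_complement_eq₁₁ C N _ _ hMpd.1, neg_add_cancel,
        dotProduct_zero, zero_add] at hv
      rw [dotProduct_mulVec, hS]
      exact hv
  have hdetBlock : (Matrix.fromBlocks M C Cᴴ N).det = Sx.det * Se.det := by
    rw [← hQPQ, Matrix.det_mul, Matrix.det_mul, mul_right_comm, ← Matrix.det_mul, hQQ,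
      Matrix.det_one, one_mul, hP, Matrix.det_fromBlocks_zero₂₁]
  have hdetSchur : Sx.det * Se.det = M.det * (N - S).det := by
    rw [← hdetBlock, Matrix.det_fromBlocks₁₁, invOf_eq_nonsing_inv, ← hS]
  have hltdet : (N - S).det < N.det := by
    have h := det_lt_det_add_tm hSchurPD hSpsd hS0
    rwa [sub_add_cancel] at h
  have hMld : Sx.det * Se.det < M.det * N.det := by
    rw [hdetSchur]
    exact (mul_lt_mul_iff_right₀ hMpd.det_pos).mpr hltdet
  have h1 : Real.log (Sx.det * Se.det) < Real.log (M.det * N.det) :=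
    Real.log_lt_log (mul_pos hx.det_pos he.det_pos) hMld
  rw [Real.log_mul hx.det_pos.ne' he.det_pos.ne',
    Real.log_mul hMpd.det_pos.ne' hNpd.det_pos.ne'] at h1
  linarith
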